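/- arXiv:1401.5086 — 2 statements merged into one kernel-verified Lean document; each statement's English description precedes it below -/
import Mathlib

section
/- Let f ∈ ℂ[x], k ≥ 1, and let I ⊆ ℕ be a finite set with |I| = k. Let z = (z₁,…,z_k) ∈ R_I and fix x₀ ∈ ℂ and i ∈ {1,…,k}. Then the function of a single complex variable w ↦ F_I((z₁,…,z_{i-1}, w, z_{i+1},…,z_k), x₀) is complex differentiable at w = z_i, with derivative equal to (f'(z_i) − (∂F_I/∂x)(z, z_i)) · L_{I,i}(z, x₀), where f' and ∂F_I/∂x denote derivatives with respect to the polynomial variable x. -/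
open Matrix

noncomputable section

/-- The (square) generalized Vandermonde matrix `V_K(z)` with `(s,t)` entry `z_s ^ i_t`. -/
def vand {k : ℕ} (e : Fin k → ℕ) (z : Fin k → ℂ) : Matrix (Fin k) (Fin k) ℂ :=
  Matrix.of fun s t => z s ^ e t

/-- The generalized Lagrange polynomial `L_{K,i}(z,x) = Σ_t (V_K(z)⁻¹)_{t,i} x^{i_t}`
in the square case `|K| = k`. -/
def lag {k : ℕ} (e : Fin k → ℕ) (z : Fin k → ℂ) (i : Fin k) : Polynomial ℂ :=
  ∑ t : Fin k, Polynomial.C ((vand e z)⁻¹ t i) * Polynomial.X ^ e t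

/-- `F_K(z,·) := Σ_i f(z_i) L_{K,i}(z,·)`, the minimal-norm interpolant of `f` at `z`
with support `K`. -/
def FI {k : ℕ} (e : Fin k → ℕ) (f : Polynomial ℂ) (z : Fin k → ℂ) : Polynomial ℂ :=
  ∑ i : Fin k, Polynomial.C (f.eval (z i)) * lag e z i

variable {k : ℕ}
lemma eval_sum_pow (e : Fin k → ℕ) (z : Fin k → ℂ) (c : Fin k → ℂ) (s : Fin k) :
    ∑ t, c t * (z s) ^ e t = (vand e z).mulVec c s := by
  simp [Matrix.mulVec, dotProduct, vand, mul_comm]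
lemma lag_eval (e : Fin k → ℕ) (z : Fin k → ℂ) (i : Fin k) (x : ℂ) :
    (lag e z i).eval x = ∑ t, (vand e z)⁻¹ t i * x ^ e t := by
  simp [lag, Polynomial.eval_finset_sum]
lemma FI_eval (e : Fin k → ℕ) (f : Polynomial ℂ) (z : Fin k → ℂ) (x : ℂ) :
    (FI e f z).eval x
      = ∑ t, ((vand e z)⁻¹.mulVec (fun s => f.eval (z s))) t * x ^ e t := by
  simp only [FI, Polynomial.eval_finset_sum, Polynomial.eval_mul, Polynomial.eval_C,
    lag_eval, Matrix.mulVec, dotProduct, Finset.mul_sum, Finset.sum_mul]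
  rw [Finset.sum_comm]
  apply Finset.sum_congr rfl; intro t _
  apply Finset.sum_congr rfl; intro j _
  ring
lemma interp (e : Fin k → ℕ) (z : Fin k → ℂ) (hz : IsUnit (vand e z).det)
    (f : Polynomial ℂ) (s : Fin k) : (FI e f z).eval (z s) = f.eval (z s) := by
  rw [FI_eval, eval_sum_pow, Matrix.mulVec_mulVec, Matrix.mul_nonsing_inv _ hz,
    Matrix.one_mulVec]

lemma key (e : Fin k → ℕ) (z : Fin k → ℂ) (hz : IsUnit (vand e z).det)
    (f : Polynomial ℂ) (i : Fin k) (w : ℂ)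
    (hw : IsUnit (vand e (Function.update z i w)).det) (x₀ : ℂ) :
    (FI e f (Function.update z i w)).eval x₀
      = (FI e f z).eval x₀
        + (f.eval w - (FI e f z).eval w) * (lag e (Function.update z i w) i).eval x₀ := by
  set z' := Function.update z i w with hz'
  set V' := vand e z' with hV'
  set c : Fin k → ℂ := (vand e z)⁻¹.mulVec (fun s => f.eval (z s)) with hc
  set c' : Fin k → ℂ := V'⁻¹.mulVec (fun s => f.eval (z' s)) with hc'
  set h := f.eval w - (FI e f z).eval w with hh
  set d : Fin k → ℂ := fun t => V'⁻¹ t i with hd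
  have hVV' : V' * V'⁻¹ = 1 := Matrix.mul_nonsing_inv _ hw
  have hcc : c' = c + h • d := by
    have hinj : Function.Injective V'.mulVec := by
      intro a b hab
      have := congrArg (V'⁻¹.mulVec) hab
      rwa [Matrix.mulVec_mulVec, Matrix.mulVec_mulVec, Matrix.nonsing_inv_mul _ hw,
        Matrix.one_mulVec, Matrix.one_mulVec] at this
    apply hinj
    funext s
    have h1 : V'.mulVec c' s = f.eval (z' s) := by
      rw [hc', Matrix.mulVec_mulVec, hVV', Matrix.one_mulVec]
    have h2 : V'.mulVec c s = (FI e f z).eval (z' s) := by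
      rw [FI_eval, eval_sum_pow e z' c s]
    have h3 : V'.mulVec d s = if s = i then 1 else 0 := by
      have : V'.mulVec d s = (V' * V'⁻¹) s i := by
        simp [Matrix.mulVec, dotProduct, Matrix.mul_apply, hd]
      rw [this, hVV', Matrix.one_apply]
    rw [h1, Matrix.mulVec_add, Matrix.mulVec_smul, Pi.add_apply, Pi.smul_apply, h2, h3]
    by_cases hs : s = i
    · subst hs
      simp [hz', Function.update_self, hh]
    · simp [hz', Function.update_of_ne hs, hs, interp e z hz f s]
  rw [FI_eval, ← hV', ← hc', hcc, FI_eval e f z, ← hc, lag_eval, ← hV']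
  simp only [Pi.add_apply, Pi.smul_apply, smul_eq_mul, add_mul, Finset.sum_add_distrib,
    Finset.mul_sum]
  ring_nf
  congr 1
  apply Finset.sum_congr rfl; intro t _; ring

def Wmat (e : Fin k → ℕ) (z : Fin k → ℂ) (i : Fin k) : Matrix (Fin k) (Fin k) (Polynomial ℂ) :=
  Matrix.of fun s t => if s = i then Polynomial.X ^ e t else Polynomial.C (z s ^ e t)

lemma Wmat_map (e : Fin k → ℕ) (z : Fin k → ℂ) (i : Fin k) (w : ℂ) :
    (Wmat e z i).map (Polynomial.evalRingHom w) = vand e (Function.update z i w) := by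
  ext s t
  by_cases hs : s = i <;>
    simp [Wmat, vand, Matrix.map_apply, Function.update_apply, hs]

lemma det_eval (e : Fin k → ℕ) (z : Fin k → ℂ) (i : Fin k) (w : ℂ) :
    (vand e (Function.update z i w)).det = (Wmat e z i).det.eval w := by
  rw [← Wmat_map e z i w, ← RingHom.mapMatrix_apply, ← RingHom.map_det]
  rfl

lemma adj_eval (e : Fin k → ℕ) (z : Fin k → ℂ) (i : Fin k) (w : ℂ) (t : Fin k) :
    (vand e (Function.update z i w)).adjugate t i = ((Wmat e z i).adjugate t i).eval w := by
  rw [← Wmat_map e z i w, ← RingHom.mapMatrix_apply, ← RingHom.map_adjugate]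
  rfl

lemma lag_update_eval (e : Fin k → ℕ) (z : Fin k → ℂ) (i : Fin k) (x₀ w : ℂ) :
    (lag e (Function.update z i w) i).eval x₀
      = ((Wmat e z i).det.eval w)⁻¹
        * (∑ t, (Wmat e z i).adjugate t i * Polynomial.C (x₀ ^ e t)).eval w := by
  rw [lag_eval]
  simp only [Matrix.inv_def, Ring.inverse_eq_inv', Matrix.smul_apply, smul_eq_mul,
    Polynomial.eval_finset_sum, Polynomial.eval_mul, Polynomial.eval_C, Finset.mul_sum]
  apply Finset.sum_congr rfl; intro t _
  rw [det_eval, adj_eval]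
  ring

lemma diffM (e : Fin k → ℕ) (z : Fin k → ℂ) (hz : IsUnit (vand e z).det)
    (i : Fin k) (x₀ : ℂ) :
    DifferentiableAt ℂ (fun w => (lag e (Function.update z i w) i).eval x₀) (z i) := by
  have hne : (Wmat e z i).det.eval (z i) ≠ 0 := by
    rw [← det_eval, Function.update_eq_self]
    exact hz.ne_zero
  have : (fun w => (lag e (Function.update z i w) i).eval x₀)
      = fun w => ((Wmat e z i).det.eval w)⁻¹
        * (∑ t, (Wmat e z i).adjugate t i * Polynomial.C (x₀ ^ e t)).eval w := by
    funext w; exact lag_update_eval e z i x₀ w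
  rw [this]
  exact (((Wmat e z i).det.differentiable.differentiableAt).inv hne).mul
    (Polynomial.differentiable _).differentiableAt

/-- for `|I| = k` and `z ∈ R_I`, the function `w ↦ F_I(z[i ← w], x₀)` is
complex differentiable at `w = z_i` with derivative
`(f'(z_i) − (∂F_I/∂x)(z, z_i)) · L_{I,i}(z, x₀)`. -/
theorem stmt7 {k : ℕ} (hk : 1 ≤ k) (e : Fin k → ℕ) (he : StrictMono e)
    (f : Polynomial ℂ) (z : Fin k → ℂ) (hz : IsUnit (vand e z).det)
    (x₀ : ℂ) (i : Fin k) :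
    HasDerivAt (fun w : ℂ => (FI e f (Function.update z i w)).eval x₀)
      (((Polynomial.derivative f).eval (z i)
          - (Polynomial.derivative (FI e f z)).eval (z i)) * (lag e z i).eval x₀)
      (z i) := by
  have hcont : ContinuousAt (fun w => (vand e (Function.update z i w)).det) (z i) := by
    have h1 : (fun w => (vand e (Function.update z i w)).det)
        = fun w => (Wmat e z i).det.eval w := funext (det_eval e z i)
    rw [h1]; exact ((Wmat e z i).det.continuous).continuousAt
  have h0 : (vand e (Function.update z i (z i))).det ≠ 0 := by
    rw [Function.update_eq_self]; exact hz.ne_zero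
  have hev : ∀ᶠ w in nhds (z i), IsUnit (vand e (Function.update z i w)).det :=
    (hcont.eventually_ne h0).mono fun w hw => isUnit_iff_ne_zero.2 hw
  set M := fun w => (lag e (Function.update z i w) i).eval x₀ with hMdef
  have hMd : HasDerivAt M (deriv M (z i)) (z i) := (diffM e z hz i x₀).hasDerivAt
  have hh : HasDerivAt (fun w => f.eval w - (FI e f z).eval w)
      ((Polynomial.derivative f).eval (z i)
        - (Polynomial.derivative (FI e f z)).eval (z i)) (z i) :=
    (f.hasDerivAt (z i)).sub ((FI e f z).hasDerivAt (z i))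
  have hzero : Polynomial.eval (z i) f - Polynomial.eval (z i) (FI e f z) = 0 := by
    rw [interp e z hz f i]; ring
  have hMzi : M (z i) = (lag e z i).eval x₀ := by
    rw [hMdef]; simp only [Function.update_eq_self]
  have hG : HasDerivAt
      (fun w => (FI e f z).eval x₀ + (f.eval w - (FI e f z).eval w) * M w)
      (((Polynomial.derivative f).eval (z i)
          - (Polynomial.derivative (FI e f z)).eval (z i)) * (lag e z i).eval x₀)
      (z i) := by
    have h2 := (hasDerivAt_const (z i) ((FI e f z).eval x₀)).add (hh.mul hMd)
    convert h2 using 1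
    · rfl
    · rfl
    · rfl
    rw [hzero, hMzi]
    ring
  refine hG.congr_of_eventuallyEq ?_
  filter_upwards [hev] with w hw
  exact key e z hz f i w hw x₀
end
end

section
/- Let N > n ≥ 1, k ≥ 1, let f₁,…,f_N : ℂⁿ → ℂ be analytic functions, let B₁,…,B_N be linearly independent finite lists of analytic functions ℂⁿ → ℂ each of length ≥ k, and assume R_{\vec B} is nonempty. Then the infimum over z ∈ R_{\vec B} of ‖W_{\vec B}(z)‖² := Σ_{i=1}^N ‖p_i(z,·)‖²_{B_i} equals the infimum over (f̃₁,…,f̃_N) ∈ Ω_{\vec B,k}(f) of Σ_{i=1}^N ‖f_i − f̃_i‖²_{B_i}. -/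
open Matrix

noncomputable section

/-- The generalized Vandermonde matrix `V_B(z)` with `(i,j)` entry `b_j(z_i)`. -/
def vandB {n k m : ℕ} (B : Fin m → (Fin n → ℂ) → ℂ) (z : Fin k → Fin n → ℂ) :
    Matrix (Fin k) (Fin m) ℂ :=
  Matrix.of fun i j => B j (z i)

/-- Moore–Penrose pseudoinverse `V† = V*(VV*)⁻¹` of a full-row-rank matrix. -/
def pinv {k m : ℕ} (V : Matrix (Fin k) (Fin m) ℂ) : Matrix (Fin m) (Fin k) ℂ :=
  V.conjTranspose * (V * V.conjTranspose)⁻¹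

/-- The generalized Lagrange function `L_{B,i}(z,x) = Σ_t (V_B(z)†)_{t,i} b_t(x)`. -/
def lagB {n k m : ℕ} (B : Fin m → (Fin n → ℂ) → ℂ) (z : Fin k → Fin n → ℂ) (i : Fin k)
    (x : Fin n → ℂ) : ℂ :=
  ∑ t : Fin m, pinv (vandB B z) t i * B t x

/-- `M_B(z) = V_B(z) V_B(z)*`. -/
def MB {n k m : ℕ} (B : Fin m → (Fin n → ℂ) → ℂ) (z : Fin k → Fin n → ℂ) :
    Matrix (Fin k) (Fin k) ℂ :=
  vandB B z * (vandB B z).conjTranspose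

/-- The evaluation vector `(f(z₁),…,f(z_k))`. -/
def evalVecB {n k : ℕ} (f : (Fin n → ℂ) → ℂ) (z : Fin k → Fin n → ℂ) : Fin k → ℂ :=
  fun j => f (z j)

open ComplexOrder in
lemma isUnit_gram_det {k m : ℕ} (V : Matrix (Fin k) (Fin m) ℂ)
    (h : V.rank = k) : IsUnit (V * V.conjTranspose).det := by
  have hrank : (V * V.conjTranspose).rank = k := by
    rw [Matrix.rank_self_mul_conjTranspose, h]
  have htop : LinearMap.range (V * V.conjTranspose).mulVecLin = ⊤ := by
    apply Submodule.eq_top_of_finrank_eq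
    rw [Module.finrank_fin_fun]
    exact hrank
  have hsurj : Function.Surjective ((V * V.conjTranspose).mulVec) :=
    LinearMap.range_eq_top.mp htop
  exact (Matrix.isUnit_iff_isUnit_det _).mp (Matrix.mulVec_surjective_iff_isUnit.mp hsurj)

lemma mul_pinv {k m : ℕ} (V : Matrix (Fin k) (Fin m) ℂ) (h : V.rank = k) :
    V * pinv V = 1 := by
  rw [pinv, ← Matrix.mul_assoc]
  exact Matrix.mul_nonsing_inv _ (isUnit_gram_det V h)

lemma proj_bound {k m : ℕ} (V : Matrix (Fin k) (Fin m) ℂ) (h : V.rank = k)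
    (c : Fin m → ℂ) :
    ∑ t, ‖(pinv V *ᵥ (V *ᵥ c)) t‖ ^ 2 ≤ ∑ t, ‖c t‖ ^ 2 := by
  set P : Matrix (Fin m) (Fin m) ℂ := pinv V * V with hPdef
  have hdet : IsUnit (V * V.conjTranspose).det := isUnit_gram_det V h
  have hVP : V * pinv V = 1 := mul_pinv V h
  have hPP : P * P = P := by
    rw [hPdef, Matrix.mul_assoc, ← Matrix.mul_assoc V (pinv V) V, hVP, Matrix.one_mul]
  have hPH : P.conjTranspose = P := by
    rw [hPdef, pinv, Matrix.conjTranspose_mul, Matrix.conjTranspose_mul,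
      Matrix.conjTranspose_nonsing_inv, Matrix.conjTranspose_mul,
      Matrix.conjTranspose_conjTranspose, Matrix.mul_assoc]
  set y : Fin m → ℂ := P *ᵥ c with hy
  have hyy : pinv V *ᵥ (V *ᵥ c) = y := by rw [hy, hPdef, Matrix.mulVec_mulVec]
  rw [hyy]
  -- key identity : star y ⬝ᵥ y = star c ⬝ᵥ y
  have key : star y ⬝ᵥ y = star c ⬝ᵥ y := by
    rw [hy, Matrix.star_mulVec, hPH]
    rw [← Matrix.dotProduct_mulVec, Matrix.mulVec_mulVec, hPP]
  -- move to EuclideanSpace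
  set C : EuclideanSpace ℂ (Fin m) := (WithLp.equiv 2 (Fin m → ℂ)).symm c
  set Y : EuclideanSpace ℂ (Fin m) := (WithLp.equiv 2 (Fin m → ℂ)).symm y
  have hinYY : (inner ℂ Y Y : ℂ) = star y ⬝ᵥ y :=
    (EuclideanSpace.inner_toLp_toLp y y).trans (dotProduct_comm _ _)
  have hinCY : (inner ℂ C Y : ℂ) = star c ⬝ᵥ y :=
    (EuclideanSpace.inner_toLp_toLp c y).trans (dotProduct_comm _ _)
  have hnormY : ‖Y‖ ^ 2 = RCLike.re (inner ℂ C Y : ℂ) := by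
    rw [← inner_self_eq_norm_sq (𝕜 := ℂ), hinYY, hinCY, key]
  have hle : ‖Y‖ ^ 2 ≤ ‖C‖ * ‖Y‖ := by
    rw [hnormY]
    calc RCLike.re (inner ℂ C Y : ℂ) ≤ ‖(inner ℂ C Y : ℂ)‖ := Complex.re_le_norm _
      _ ≤ ‖C‖ * ‖Y‖ := norm_inner_le_norm C Y
  have hYC : ‖Y‖ ≤ ‖C‖ := by
    rcases eq_or_lt_of_le (norm_nonneg Y) with h0 | h0
    · rw [← h0]; exact norm_nonneg C
    · have := hle
      rw [pow_two] at this
      exact le_of_mul_le_mul_right this h0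
  have hsq : ‖Y‖ ^ 2 ≤ ‖C‖ ^ 2 := by
    apply pow_le_pow_left₀ (norm_nonneg Y) hYC
  have eY : ‖Y‖ ^ 2 = ∑ t, ‖y t‖ ^ 2 := by
    rw [EuclideanSpace.norm_eq]
    exact Real.sq_sqrt (Finset.sum_nonneg fun t _ => sq_nonneg ‖Y t‖)
  have eC : ‖C‖ ^ 2 = ∑ t, ‖c t‖ ^ 2 := by
    rw [EuclideanSpace.norm_eq]
    exact Real.sq_sqrt (Finset.sum_nonneg fun t _ => sq_nonneg ‖C t‖)
  rw [← eY, ← eC]; exact hsq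

/-- the infimum of `‖W_{B⃗}(z)‖² = Σ_i ‖p_i(z,·)‖²_{B_i}` over `z ∈ R_{B⃗}`
equals the infimum of `Σ_i ‖f_i − f̃_i‖²_{B_i}` over `Ω_{B⃗,k}(f)`. The coefficient vector
of `p_i(z,·)` in the basis `B_i` is `V_{B_i}(z)† f_i(z)`, and tuples of `Ω_{B⃗,k}(f)` are
parametrized by their (unique) coefficient vectors `c_i` with `f̃_i = f_i − Σ_t c_{i,t} b_{i,t}`
vanishing at some point of `R_{B⃗}`. -/
theorem stmt13 {N n k : ℕ} (hn : 1 ≤ n) (hN : n < N) (hk : 1 ≤ k)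
    (m : Fin N → ℕ) (hm : ∀ i, k ≤ m i)
    (f : Fin N → (Fin n → ℂ) → ℂ) (hf : ∀ i, AnalyticOnNhd ℂ (f i) Set.univ)
    (B : (i : Fin N) → Fin (m i) → (Fin n → ℂ) → ℂ)
    (hBa : ∀ i t, AnalyticOnNhd ℂ (B i t) Set.univ)
    (hBli : ∀ i, LinearIndependent ℂ (B i))
    (hne : ∃ z : Fin k → Fin n → ℂ, ∀ i, (vandB (B i) z).rank = k) :
    sInf { r : ℝ | ∃ z : Fin k → Fin n → ℂ, (∀ i, (vandB (B i) z).rank = k) ∧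
        r = ∑ i, ∑ t, ‖(pinv (vandB (B i) z) *ᵥ evalVecB (f i) z) t‖ ^ 2 } =
    sInf { r : ℝ | ∃ (c : (i : Fin N) → Fin (m i) → ℂ) (z : Fin k → Fin n → ℂ),
        (∀ i, (vandB (B i) z).rank = k) ∧
        (∀ (i : Fin N) (j : Fin k), f i (z j) - ∑ t, c i t * B i t (z j) = 0) ∧
        r = ∑ i, ∑ t, ‖c i t‖ ^ 2 } := by
  obtain ⟨z₀, hz₀⟩ := hne
  set S1 : Set ℝ := { r : ℝ | ∃ z : Fin k → Fin n → ℂ,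
      (∀ i, (vandB (B i) z).rank = k) ∧
      r = ∑ i, ∑ t, ‖(pinv (vandB (B i) z) *ᵥ evalVecB (f i) z) t‖ ^ 2 } with hS1
  set S2 : Set ℝ := { r : ℝ | ∃ (c : (i : Fin N) → Fin (m i) → ℂ)
      (z : Fin k → Fin n → ℂ),
      (∀ i, (vandB (B i) z).rank = k) ∧
      (∀ (i : Fin N) (j : Fin k), f i (z j) - ∑ t, c i t * B i t (z j) = 0) ∧
      r = ∑ i, ∑ t, ‖c i t‖ ^ 2 } with hS2
  have hsub : S1 ⊆ S2 := by
    rintro r ⟨z, hz, rfl⟩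
    refine ⟨fun i => pinv (vandB (B i) z) *ᵥ evalVecB (f i) z, z, hz, ?_, rfl⟩
    intro i j
    have hVc : vandB (B i) z *ᵥ (pinv (vandB (B i) z) *ᵥ evalVecB (f i) z)
        = evalVecB (f i) z := by
      rw [Matrix.mulVec_mulVec, mul_pinv _ (hz i), Matrix.one_mulVec]
    have h1 := congrFun hVc j
    have h2 : (vandB (B i) z *ᵥ (pinv (vandB (B i) z) *ᵥ evalVecB (f i) z)) j
        = ∑ t, B i t (z j) * (pinv (vandB (B i) z) *ᵥ evalVecB (f i) z) t := rfl
    rw [sub_eq_zero]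
    calc f i (z j) = (vandB (B i) z *ᵥ (pinv (vandB (B i) z) *ᵥ evalVecB (f i) z)) j :=
          h1.symm
      _ = ∑ t, B i t (z j) * (pinv (vandB (B i) z) *ᵥ evalVecB (f i) z) t := h2
      _ = ∑ t, (pinv (vandB (B i) z) *ᵥ evalVecB (f i) z) t * B i t (z j) :=
          Finset.sum_congr rfl fun t _ => mul_comm _ _
  have hB2 : ∀ r ∈ S2, ∃ r' ∈ S1, r' ≤ r := by
    rintro r ⟨c, z, hz, hvan, rfl⟩
    refine ⟨_, ⟨z, hz, rfl⟩, ?_⟩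
    apply Finset.sum_le_sum
    intro i _
    have heval : evalVecB (f i) z = vandB (B i) z *ᵥ c i := by
      funext j
      have h2 := hvan i j
      rw [sub_eq_zero] at h2
      show f i (z j) = ∑ t, B i t (z j) * c i t
      rw [h2]
      exact Finset.sum_congr rfl fun t _ => mul_comm _ _
    rw [heval]
    exact proj_bound _ (hz i) (c i)
  have hS1ne : S1.Nonempty := ⟨_, ⟨z₀, hz₀, rfl⟩⟩
  have hS2ne : S2.Nonempty := ⟨_, hsub hS1ne.choose_spec⟩
  have bdd1 : BddBelow S1 := by
    refine ⟨0, fun r hr => ?_⟩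
    obtain ⟨z, hz, rfl⟩ := hr
    positivity
  have bdd2 : BddBelow S2 := by
    refine ⟨0, fun r hr => ?_⟩
    obtain ⟨c, z, hz, hv, rfl⟩ := hr
    positivity
  apply le_antisymm
  · refine le_csInf hS2ne fun r hr => ?_
    obtain ⟨r', hr', hle⟩ := hB2 r hr
    exact (csInf_le bdd1 hr').trans hle
  · exact csInf_le_csInf bdd2 hS1ne hsub
end
end
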